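/- arXiv:1502.06168 — 2 statements merged into one kernel-verified Lean document; each statement's English description precedes it below -/
import Mathlib

section
/- Let G be the intersection graph of a finite family of axis-parallel rectangles in the plane. Then β(G) ≤ 2·α(G)·(log₂(α(G)) + 1). -/
open SimpleGraph

/-- `s` is an independent set in `G`: pairwise nonadjacent vertices. -/
def SimpleGraph.IsIndepFinset {V : Type*} (G : SimpleGraph V) (s : Finset V) : Prop :=
  (s : Set V).Pairwise fun a b => ¬ G.Adj a b

/-- The independence number `α(G)`: the largest size of an independent set. -/
noncomputable def indepNum {V : Type*} (G : SimpleGraph V) : ℕ :=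
  sSup {n | ∃ s : Finset V, G.IsIndepFinset s ∧ s.card = n}

/-- `C` is a clique cover of `G`: a family of cliques covering every vertex. -/
def SimpleGraph.IsCliqueCover {V : Type*} (G : SimpleGraph V) (C : Finset (Finset V)) : Prop :=
  (∀ c ∈ C, G.IsClique (c : Set V)) ∧ ∀ v : V, ∃ c ∈ C, v ∈ c

/-- The clique cover number `β(G)`: minimum number of cliques covering `V(G)`. -/
noncomputable def cliqueCoverNum {V : Type*} (G : SimpleGraph V) : ℕ :=
  sInf {n | ∃ C : Finset (Finset V), G.IsCliqueCover C ∧ C.card = n}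

/-- `G` is an interval graph: the intersection graph of closed real intervals. -/
def IsIntervalGraph {V : Type*} (G : SimpleGraph V) : Prop :=
  ∃ a b : V → ℝ, ∀ u v : V, G.Adj u v ↔
    u ≠ v ∧ (Set.Icc (a u) (b u) ∩ Set.Icc (a v) (b v)).Nonempty

/-- `G` is perfect (stated via clique covers): `β = α` on every induced subgraph. -/
def IsPerfectGraph {V : Type*} (G : SimpleGraph V) : Prop :=
  ∀ W : Finset V, cliqueCoverNum (G.induce (W : Set V)) = _root_.indepNum (G.induce (W : Set V))

/-- `φ(G,H)`: the maximum of `β(G[W])/α(G[W])` over subsets `W` inducing cliques in `H`. -/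
noncomputable def phi {V : Type*} (G H : SimpleGraph V) : ℝ :=
  sSup {x : ℝ | ∃ W : Finset V, H.IsClique (W : Set V) ∧
    x = (cliqueCoverNum (G.induce (W : Set V)) : ℝ) / (_root_.indepNum (G.induce (W : Set V)) : ℝ)}

/- ## Auxiliary lemmas -/

lemma indep_mono {V : Type*} {G : SimpleGraph V} {s t : Finset V}
    (h : s ⊆ t) (ht : G.IsIndepFinset t) : G.IsIndepFinset s :=
  Set.Pairwise.mono (Finset.coe_subset.mpr h) ht

lemma icc_prod_inter_nonempty {a b c d a' b' c' d' : ℝ} :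
    ((Set.Icc a b ×ˢ Set.Icc c d) ∩ (Set.Icc a' b' ×ˢ Set.Icc c' d')).Nonempty ↔
      ((Set.Icc a b ∩ Set.Icc a' b').Nonempty ∧ (Set.Icc c d ∩ Set.Icc c' d').Nonempty) := by
  constructor
  · rintro ⟨⟨x, y⟩, ⟨⟨hx1, hy1⟩, hx2, hy2⟩⟩
    exact ⟨⟨x, hx1, hx2⟩, ⟨y, hy1, hy2⟩⟩
  · rintro ⟨⟨x, hx⟩, ⟨y, hy⟩⟩
    exact ⟨(x, y), ⟨⟨hx.1, hy.1⟩, ⟨hx.2, hy.2⟩⟩⟩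

section Rect

variable {n : ℕ} (a b c d : Fin n → ℝ) (G : SimpleGraph (Fin n))
variable (hG : ∀ u v : Fin n, G.Adj u v ↔ u ≠ v ∧
      ((Set.Icc (a u) (b u) ×ˢ Set.Icc (c u) (d u)) ∩
        (Set.Icc (a v) (b v) ×ˢ Set.Icc (c v) (d v))).Nonempty)

include hG

lemma rect_nonadj {u w : Fin n} (h : b u < a w) : ¬ G.Adj u w := by
  intro hadj
  obtain ⟨p, hp1, hp2⟩ := ((hG u w).mp hadj).2
  have h1 : p.1 ≤ b u := hp1.1.2
  have h2 : a w ≤ p.1 := hp2.1.1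
  linarith

omit hG

/-- Greedy clique cover for interval graphs: the cover size is at most the size
of some independent set. -/
lemma interval_greedy (p q : Fin n → ℝ) :
    ∀ S : Finset (Fin n), (∀ v ∈ S, p v ≤ q v) →
    (∀ u ∈ S, ∀ v ∈ S, (G.Adj u v ↔ u ≠ v ∧
        (Set.Icc (p u) (q u) ∩ Set.Icc (p v) (q v)).Nonempty)) →
    ∃ (C : Finset (Finset (Fin n))) (s : Finset (Fin n)),
      (∀ c' ∈ C, G.IsClique (c' : Set (Fin n))) ∧ (∀ v ∈ S, ∃ c' ∈ C, v ∈ c') ∧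
      s ⊆ S ∧ G.IsIndepFinset s ∧ C.card ≤ s.card := by
  intro S
  induction S using Finset.strongInduction with
  | _ S ih =>
    intro hne hadj
    rcases S.eq_empty_or_nonempty with rfl | hS
    · exact ⟨∅, ∅, by simp, by simp, by simp, by simp [SimpleGraph.IsIndepFinset], by simp⟩
    obtain ⟨u, huS, humin⟩ := S.exists_min_image q hS
    classical
    set T := S.filter (fun v => p v ≤ q u) with hT
    have huT : u ∈ T := Finset.mem_filter.mpr ⟨huS, hne u huS⟩
    set S' := S \ T with hS'
    have hS'sub : S' ⊂ S := by
      refine Finset.ssubset_iff_of_subset (Finset.sdiff_subset) |>.mpr ⟨u, huS, ?_⟩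
      simp [hS', huT]
    have hclT : G.IsClique (T : Set (Fin n)) := by
      intro x hx y hy hxy
      rw [Finset.mem_coe, hT, Finset.mem_filter] at hx hy
      rw [hadj x hx.1 y hy.1]
      exact ⟨hxy, ⟨q u, ⟨hx.2, humin x hx.1⟩, ⟨hy.2, humin y hy.1⟩⟩⟩
    have hunadj : ∀ w ∈ S', ¬ G.Adj u w := by
      intro w hw hadjuw
      have hwS : w ∈ S := (Finset.mem_sdiff.mp hw).1
      have hwt : ¬ p w ≤ q u := fun h =>
        (Finset.mem_sdiff.mp hw).2 (Finset.mem_filter.mpr ⟨hwS, h⟩)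
      obtain ⟨x, hx1, hx2⟩ := ((hadj u huS w hwS).mp hadjuw).2
      exact hwt (hx2.1.trans hx1.2)
    have hne' : ∀ v ∈ S', p v ≤ q v := fun v hv => hne v (Finset.mem_sdiff.mp hv).1
    have hadj' : ∀ u' ∈ S', ∀ v ∈ S', (G.Adj u' v ↔ u' ≠ v ∧
        (Set.Icc (p u') (q u') ∩ Set.Icc (p v) (q v)).Nonempty) := fun x hx y hy =>
      hadj x (Finset.mem_sdiff.mp hx).1 y (Finset.mem_sdiff.mp hy).1
    obtain ⟨C', s', h1, h2, h3, h4, h5⟩ := ih S' hS'sub hne' hadj'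
    have hus' : u ∉ s' := fun h => (Finset.mem_sdiff.mp (h3 h)).2 huT
    refine ⟨insert T C', insert u s', ?_, ?_, ?_, ?_, ?_⟩
    · intro c' hc'
      rcases Finset.mem_insert.mp hc' with rfl | hc'
      · exact hclT
      · exact h1 c' hc'
    · intro v hv
      by_cases hvt : p v ≤ q u
      · exact ⟨T, Finset.mem_insert_self _ _, Finset.mem_filter.mpr ⟨hv, hvt⟩⟩
      · obtain ⟨c', hc1, hc2⟩ := h2 v (Finset.mem_sdiff.mpr ⟨hv, fun h =>
          hvt (Finset.mem_filter.mp h).2⟩)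
        exact ⟨c', Finset.mem_insert_of_mem hc1, hc2⟩
    · intro v hv
      rcases Finset.mem_insert.mp hv with rfl | hv
      · exact huS
      · exact (Finset.mem_sdiff.mp (h3 hv)).1
    · unfold SimpleGraph.IsIndepFinset
      rw [Finset.coe_insert]
      haveI : Std.Symm (fun x y : Fin n => ¬ G.Adj x y) := ⟨fun x y (h : ¬ G.Adj x y) h' => h h'.symm⟩
      rw [Set.pairwise_insert_of_symm]
      exact ⟨h4, fun w hw _ => hunadj w (h3 (Finset.mem_coe.mp hw))⟩
    · calc (insert T C').card ≤ C'.card + 1 := Finset.card_insert_le _ _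
        _ ≤ s'.card + 1 := by omega
        _ = (insert u s').card := (Finset.card_insert_of_notMem hus').symm

lemma clog_arith {k : ℕ} (hk : 2 ≤ k) :
    (k/2 - 1) * (Nat.clog 2 (k/2 - 1) + 1) + (k - k/2) * (Nat.clog 2 (k - k/2) + 1) + k
      ≤ k * (Nat.clog 2 k + 1) := by
  set m := k / 2 with hm
  have h1 : m - 1 ≤ k - m := by omega
  have h2 : Nat.clog 2 (m - 1) ≤ Nat.clog 2 (k - m) := Nat.clog_mono_right _ h1
  have h3 : Nat.clog 2 k = Nat.clog 2 (k - m) + 1 := by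
    rw [Nat.clog_of_two_le (by norm_num) hk]
    congr 2
    omega
  set X := Nat.clog 2 (k - m) with hX
  calc (m - 1) * (Nat.clog 2 (m - 1) + 1) + (k - m) * (X + 1) + k
      ≤ (m - 1) * (X + 1) + (k - m) * (X + 1) + k := by
        have := Nat.mul_le_mul_left (m - 1) (Nat.add_le_add_right h2 1)
        omega
    _ = ((m - 1) + (k - m)) * (X + 1) + k := by rw [Nat.add_mul]
    _ = (k - 1) * (X + 1) + k := by congr 2; omega
    _ ≤ k * (X + 1) + k := by
        have := Nat.mul_le_mul_right (X + 1) (Nat.sub_le k 1)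
        omega
    _ = k * (X + 2) := by ring
    _ = k * (Nat.clog 2 k + 1) := by rw [h3]

include hG

/-- Main recursion: divide and conquer on a vertical line. -/
lemma rect_key : ∀ k : ℕ, ∀ S : Finset (Fin n),
      (∀ v ∈ S, a v ≤ b v ∧ c v ≤ d v) →
      (∀ s, s ⊆ S → G.IsIndepFinset s → s.card ≤ k) →
      ∃ C : Finset (Finset (Fin n)),
        (∀ c' ∈ C, G.IsClique (c' : Set (Fin n))) ∧
        (∀ v ∈ S, ∃ c' ∈ C, v ∈ c') ∧
        C.card ≤ k * (Nat.clog 2 k + 1) := by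
  intro k
  induction k using Nat.strong_induction_on with
  | _ k ih =>
  intro S hrect hk
  classical
  rcases Nat.eq_zero_or_pos k with rfl | hk1
  · have hSe : S = ∅ := by
      by_contra h
      obtain ⟨v, hv⟩ := Finset.nonempty_iff_ne_empty.mpr h
      have := hk {v} (by simpa using hv) (by simp [SimpleGraph.IsIndepFinset])
      simp at this
    subst hSe
    exact ⟨∅, by simp, by simp, by simp⟩
  rcases eq_or_lt_of_le (show 1 ≤ k from hk1) with hk1' | hk2
  · -- k = 1 : S is a clique
    have hclS : G.IsClique (S : Set (Fin n)) := by
      intro x hx y hy hxy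
      by_contra hne'
      have hpair : G.IsIndepFinset ({x, y} : Finset (Fin n)) := by
        intro u hu v hv huv
        simp only [Finset.coe_insert, Set.mem_insert_iff, Finset.coe_singleton,
          Set.mem_singleton_iff] at hu hv
        rcases hu with rfl | rfl <;> rcases hv with rfl | rfl
        · exact absurd rfl huv
        · exact hne'
        · exact fun h => hne' h.symm
        · exact absurd rfl huv
      have hsub : ({x, y} : Finset (Fin n)) ⊆ S := by
        intro z hz
        rcases Finset.mem_insert.mp hz with rfl | hz
        · exact Finset.mem_coe.mp hx
        · rw [Finset.mem_singleton] at hz; subst hz; exact Finset.mem_coe.mp hy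
      have := hk _ hsub hpair
      rw [Finset.card_pair hxy] at this
      omega
    refine ⟨{S}, ?_, ?_, ?_⟩
    · intro c' hc'; rw [Finset.mem_singleton] at hc'; subst hc'; exact hclS
    · intro v hv; exact ⟨S, Finset.mem_singleton_self S, hv⟩
    · simp [← hk1', Nat.clog_one_right]
  -- k ≥ 2
  set m := k / 2 with hm
  have hm1 : 1 ≤ m := by omega
  by_cases hP : ∃ s, s ⊆ S ∧ G.IsIndepFinset s ∧ s.card = m
  case neg =>
    have hbound : ∀ s, s ⊆ S → G.IsIndepFinset s → s.card ≤ m - 1 := by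
      intro s hs hi
      by_contra h
      obtain ⟨s', hs', hscard⟩ := Finset.exists_subset_card_eq (s := s) (n := m) (by omega)
      exact hP ⟨s', hs'.trans hs, indep_mono hs' hi, hscard⟩
    obtain ⟨C, h1, h2, h3⟩ := ih (m - 1) (by omega) S hrect hbound
    refine ⟨C, h1, h2, h3.trans ?_⟩
    exact Nat.mul_le_mul (by omega)
      (Nat.add_le_add_right (Nat.clog_mono_right _ (by omega)) 1)
  case pos =>
  set F := S.powerset.filter (fun s => G.IsIndepFinset s ∧ s.card = m) with hF
  have hFne : F.Nonempty := by
    obtain ⟨s, h1, h2, h3⟩ := hP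
    exact ⟨s, Finset.mem_filter.mpr ⟨Finset.mem_powerset.mpr h1, h2, h3⟩⟩
  obtain ⟨s₀, hs₀F, hs₀min⟩ := F.exists_min_image
    (fun s => if h : s.Nonempty then s.sup' h b else 0) hFne
  have hs₀ := Finset.mem_filter.mp hs₀F
  have hs₀S : s₀ ⊆ S := Finset.mem_powerset.mp hs₀.1
  have hs₀i : G.IsIndepFinset s₀ := hs₀.2.1
  have hs₀c : s₀.card = m := hs₀.2.2
  have hs₀ne : s₀.Nonempty := Finset.card_pos.mp (by omega)
  set t := s₀.sup' hs₀ne b with ht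
  set L := S.filter (fun v => b v < t) with hL
  set M := S.filter (fun v => ¬ b v < t ∧ a v ≤ t) with hM
  set R := S.filter (fun v => ¬ b v < t ∧ ¬ a v ≤ t) with hR
  -- bound for L
  have hLbound : ∀ s, s ⊆ L → G.IsIndepFinset s → s.card ≤ m - 1 := by
    intro s hs hi
    by_contra h
    obtain ⟨s', hs', hscard⟩ := Finset.exists_subset_card_eq (s := s) (n := m) (by omega)
    have hs'L : s' ⊆ L := hs'.trans hs
    have hs'F : s' ∈ F := Finset.mem_filter.mpr
      ⟨Finset.mem_powerset.mpr (hs'L.trans (Finset.filter_subset _ _)),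
        indep_mono hs' hi, hscard⟩
    have hmin := hs₀min s' hs'F
    have hs'ne : s'.Nonempty := Finset.card_pos.mp (by omega)
    rw [dif_pos hs₀ne, dif_pos hs'ne] at hmin
    have hlt : s'.sup' hs'ne b < t :=
      (Finset.sup'_lt_iff hs'ne).mpr (fun v hv => (Finset.mem_filter.mp (hs'L hv)).2)
    exact absurd hmin (not_le.mpr hlt)
  -- bound for R
  have hRbound : ∀ s, s ⊆ R → G.IsIndepFinset s → s.card ≤ k - m := by
    intro s hs hi
    have hsS : s ⊆ S := hs.trans (Finset.filter_subset _ _)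
    have hdisj : Disjoint s₀ s := by
      rw [Finset.disjoint_left]
      intro v hv hvs
      have h1 : b v ≤ t := Finset.le_sup' b hv
      have h2 : ¬ a v ≤ t := (Finset.mem_filter.mp (hs hvs)).2.2
      exact h2 ((hrect v (hsS hvs)).1.trans h1)
    have hcross : ∀ x ∈ s₀, ∀ y ∈ s, ¬ G.Adj x y := by
      intro x hx y hy
      refine rect_nonadj a b c d G hG ?_
      have h1 : b x ≤ t := Finset.le_sup' b hx
      have h2 : ¬ a y ≤ t := (Finset.mem_filter.mp (hs hy)).2.2
      linarith [not_le.mp h2]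
    have hui : G.IsIndepFinset (s₀ ∪ s) := by
      intro x hx y hy hxy
      rw [Finset.coe_union, Set.mem_union, Finset.mem_coe, Finset.mem_coe] at hx hy
      rcases hx with hx | hx <;> rcases hy with hy | hy
      · exact hs₀i (Finset.mem_coe.mpr hx) (Finset.mem_coe.mpr hy) hxy
      · exact hcross x hx y hy
      · exact fun h => hcross y hy x hx h.symm
      · exact hi (Finset.mem_coe.mpr hx) (Finset.mem_coe.mpr hy) hxy
    have hcard := hk (s₀ ∪ s) (Finset.union_subset hs₀S hsS) hui
    rw [Finset.card_union_of_disjoint hdisj, hs₀c] at hcard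
    omega
  -- M facts
  have hMfacts : ∀ v ∈ M, a v ≤ t ∧ t ≤ b v := fun v hv =>
    ⟨(Finset.mem_filter.mp hv).2.2, not_lt.mp (Finset.mem_filter.mp hv).2.1⟩
  obtain ⟨CM, sM, hCM1, hCM2, hsM1, hsM2, hsM3⟩ := interval_greedy G c d M
    (fun v hv => (hrect v (Finset.mem_filter.mp hv).1).2)
    (by
      intro u hu v hv
      rw [hG u v]
      constructor
      · rintro ⟨hne', hne2⟩
        exact ⟨hne', (icc_prod_inter_nonempty.mp hne2).2⟩
      · rintro ⟨hne', hy⟩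
        refine ⟨hne', icc_prod_inter_nonempty.mpr ⟨⟨t, ?_, ?_⟩, hy⟩⟩
        · exact ⟨(hMfacts u hu).1, (hMfacts u hu).2⟩
        · exact ⟨(hMfacts v hv).1, (hMfacts v hv).2⟩)
  have hCMcard : CM.card ≤ k :=
    hsM3.trans (hk sM (hsM1.trans (Finset.filter_subset _ _)) hsM2)
  obtain ⟨CL, hCL1, hCL2, hCL3⟩ := ih (m - 1) (by omega) L
    (fun v hv => hrect v (Finset.mem_filter.mp hv).1) hLbound
  obtain ⟨CR, hCR1, hCR2, hCR3⟩ := ih (k - m) (by omega) R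
    (fun v hv => hrect v (Finset.mem_filter.mp hv).1) hRbound
  refine ⟨CL ∪ CR ∪ CM, ?_, ?_, ?_⟩
  · intro c' hc'
    rcases Finset.mem_union.mp hc' with h | h
    · rcases Finset.mem_union.mp h with h | h
      · exact hCL1 c' h
      · exact hCR1 c' h
    · exact hCM1 c' h
  · intro v hv
    by_cases h1 : b v < t
    · obtain ⟨c', hc1, hc2⟩ := hCL2 v (Finset.mem_filter.mpr ⟨hv, h1⟩)
      exact ⟨c', Finset.mem_union_left _ (Finset.mem_union_left _ hc1), hc2⟩
    by_cases h2 : a v ≤ t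
    · obtain ⟨c', hc1, hc2⟩ := hCM2 v (Finset.mem_filter.mpr ⟨hv, h1, h2⟩)
      exact ⟨c', Finset.mem_union_right _ hc1, hc2⟩
    · obtain ⟨c', hc1, hc2⟩ := hCR2 v (Finset.mem_filter.mpr ⟨hv, h1, h2⟩)
      exact ⟨c', Finset.mem_union_left _ (Finset.mem_union_right _ hc1), hc2⟩
  · calc (CL ∪ CR ∪ CM).card ≤ (CL ∪ CR).card + CM.card := Finset.card_union_le _ _
      _ ≤ CL.card + CR.card + CM.card := by
          have := Finset.card_union_le CL CR
          omega
      _ ≤ (m - 1) * (Nat.clog 2 (m - 1) + 1) + (k - m) * (Nat.clog 2 (k - m) + 1) + k := by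
          omega
      _ ≤ k * (Nat.clog 2 k + 1) := by
          have := clog_arith hk2
          rw [← hm] at this
          exact this

end Rect

lemma indep_card_le {V : Type*} [Fintype V] (G : SimpleGraph V) {s : Finset V}
    (hs : G.IsIndepFinset s) : s.card ≤ _root_.indepNum G := by
  apply le_csSup
  · exact ⟨Fintype.card V, by rintro x ⟨s', _, rfl⟩; exact Finset.card_le_univ s'⟩
  · exact ⟨s, hs, rfl⟩

lemma cliqueCoverNum_le {V : Type*} (G : SimpleGraph V) {C : Finset (Finset V)}
    (hC : G.IsCliqueCover C) : cliqueCoverNum G ≤ C.card :=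
  Nat.sInf_le ⟨C, hC, rfl⟩

theorem rectangle_clique_cover_bound (n : ℕ) (a b c d : Fin n → ℝ)
    (G : SimpleGraph (Fin n))
    (hG : ∀ u v : Fin n, G.Adj u v ↔ u ≠ v ∧
      ((Set.Icc (a u) (b u) ×ˢ Set.Icc (c u) (d u)) ∩
        (Set.Icc (a v) (b v) ×ˢ Set.Icc (c v) (d v))).Nonempty) :
    (cliqueCoverNum G : ℝ) ≤
      2 * (_root_.indepNum G : ℝ) * (Real.logb 2 (_root_.indepNum G : ℝ) + 1) := by
  classical
  set α := _root_.indepNum G with hα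
  set E := Finset.univ.filter (fun v : Fin n => ¬ (a v ≤ b v ∧ c v ≤ d v)) with hE
  set S₁ := Finset.univ.filter (fun v : Fin n => a v ≤ b v ∧ c v ≤ d v) with hS₁
  have hEiso : ∀ v ∈ E, ∀ w, ¬ G.Adj v w := by
    intro v hv w hadj
    obtain ⟨pp, hp1, _⟩ := ((hG v w).mp hadj).2
    exact (Finset.mem_filter.mp hv).2 ⟨hp1.1.1.trans hp1.1.2, hp1.2.1.trans hp1.2.2⟩
  have hEindep : G.IsIndepFinset E := fun x hx y hy hxy =>
    hEiso x (Finset.mem_coe.mp hx) y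
  have hk1 : ∀ s, s ⊆ S₁ → G.IsIndepFinset s → s.card ≤ α - E.card := by
    intro s hs hi
    have hdisj : Disjoint s E := by
      rw [Finset.disjoint_left]
      intro v hv hvE
      exact (Finset.mem_filter.mp hvE).2 (Finset.mem_filter.mp (hs hv)).2
    have hu : G.IsIndepFinset (s ∪ E) := by
      intro x hx y hy hxy
      rw [Finset.coe_union, Set.mem_union, Finset.mem_coe, Finset.mem_coe] at hx hy
      rcases hx with hx | hx
      · rcases hy with hy | hy
        · exact hi (Finset.mem_coe.mpr hx) (Finset.mem_coe.mpr hy) hxy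
        · exact fun h => hEiso y hy x h.symm
      · exact hEiso x hx y
    have := indep_card_le G hu
    rw [Finset.card_union_of_disjoint hdisj] at this
    omega
  obtain ⟨C₁, hC1, hC2, hC3⟩ := rect_key a b c d G hG (α - E.card) S₁
    (fun v hv => (Finset.mem_filter.mp hv).2) hk1
  set C := C₁ ∪ E.image (fun v => ({v} : Finset (Fin n))) with hC
  have hcover : G.IsCliqueCover C := by
    constructor
    · intro c' hc'
      rcases Finset.mem_union.mp hc' with h | h
      · exact hC1 c' h
      · obtain ⟨v, _, rfl⟩ := Finset.mem_image.mp h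
        simp only [Finset.coe_singleton]
        exact Set.pairwise_singleton _ _
    · intro v
      by_cases hv : a v ≤ b v ∧ c v ≤ d v
      · obtain ⟨c', h1, h2⟩ := hC2 v (Finset.mem_filter.mpr ⟨Finset.mem_univ v, hv⟩)
        exact ⟨c', Finset.mem_union_left _ h1, h2⟩
      · exact ⟨{v}, Finset.mem_union_right _ (Finset.mem_image_of_mem _
          (Finset.mem_filter.mpr ⟨Finset.mem_univ v, hv⟩)), Finset.mem_singleton_self v⟩
  have hEcard : E.card ≤ α := indep_card_le G hEindep
  have hβ : cliqueCoverNum G ≤ α * (Nat.clog 2 α + 1) := by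
    have h1 := cliqueCoverNum_le G hcover
    have h2 : C.card ≤ C₁.card + E.card := by
      refine (Finset.card_union_le _ _).trans ?_
      have := Finset.card_image_le (s := E) (f := fun v => ({v} : Finset (Fin n)))
      omega
    have h3 : (α - E.card) * (Nat.clog 2 (α - E.card) + 1) + E.card
        ≤ α * (Nat.clog 2 α + 1) := by
      have hmono := Nat.clog_mono_right 2 (Nat.sub_le α E.card)
      calc (α - E.card) * (Nat.clog 2 (α - E.card) + 1) + E.card
          ≤ (α - E.card) * (Nat.clog 2 α + 1) + E.card * (Nat.clog 2 α + 1) := by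
            refine add_le_add (Nat.mul_le_mul_left _ (by omega)) ?_
            exact Nat.le_mul_of_pos_right _ (by omega)
        _ = (α - E.card + E.card) * (Nat.clog 2 α + 1) := (Nat.add_mul _ _ _).symm
        _ ≤ α * (Nat.clog 2 α + 1) := Nat.mul_le_mul_right _ (by omega)
    exact h1.trans (h2.trans ((add_le_add hC3 le_rfl).trans h3))
  have hreal : ((α * (Nat.clog 2 α + 1) : ℕ) : ℝ) ≤ 2 * (α : ℝ) * (Real.logb 2 (α : ℝ) + 1) := by
    rcases Nat.eq_zero_or_pos α with h0 | h0
    · simp [h0]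
    have hα1 : (1 : ℝ) ≤ (α : ℝ) := by exact_mod_cast h0
    have hlog0 : 0 ≤ Real.logb 2 (α : ℝ) := Real.logb_nonneg one_lt_two hα1
    have hclog : (Nat.clog 2 α : ℝ) ≤ Real.logb 2 (α : ℝ) + 1 := by
      rcases Nat.lt_or_ge α 2 with h2 | h2
      · have : α = 1 := by omega
        rw [this]
        simp [Nat.clog_one_right]
      · have h4 := Nat.pow_pred_clog_lt_self (b := 2) one_lt_two (by omega : 1 < α)
        set Lg := Nat.clog 2 α with hLg
        have hL1 : 1 ≤ Lg := Nat.clog_pos one_lt_two h2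
        have hcast : ((2:ℝ)) ^ (Lg - 1) ≤ (α : ℝ) := by
          have : ((2 ^ (Lg - 1) : ℕ) : ℝ) ≤ (α : ℝ) := by exact_mod_cast h4.le
          simpa using this
        have hlb : ((Lg - 1 : ℕ) : ℝ) ≤ Real.logb 2 (α : ℝ) := by
          calc ((Lg - 1 : ℕ) : ℝ) = Real.logb 2 ((2:ℝ) ^ (Lg - 1)) := by
                rw [Real.logb_pow]
                simp [Real.logb_self_eq_one]
            _ ≤ Real.logb 2 (α : ℝ) :=
                Real.logb_le_logb_of_le one_lt_two (by positivity) hcast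
        have : ((Lg : ℝ) - 1) = ((Lg - 1 : ℕ) : ℝ) := by
          push_cast [hL1]
          ring
        linarith [hlb, this.ge]
    push_cast
    nlinarith [hclog, hlog0, hα1]
  calc (cliqueCoverNum G : ℝ) ≤ ((α * (Nat.clog 2 α + 1) : ℕ) : ℝ) := by exact_mod_cast hβ
    _ ≤ 2 * (α : ℝ) * (Real.logb 2 (α : ℝ) + 1) := hreal
end

section
/- Let G be the intersection graph of a finite family of axis-parallel boxes in R^t, t ≥ 2. Then β(G) = O(α(G)·(log₂ α(G))^{t-1}); precisely, β(G) ≤ 2^{t-1}·α(G)·(log₂(α(G)) + 1)^{t-1}. -/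
open SimpleGraph

open Finset

open Classical in
/-- max size of an independent subset of `s`. -/
noncomputable def indepOn {V : Type*} (G : SimpleGraph V) (s : Finset V) : ℕ :=
  (s.powerset.filter (fun u => G.IsIndepFinset u)).sup Finset.card

lemma le_indepOn {V : Type*} {G : SimpleGraph V} {s u : Finset V}
    (h1 : u ⊆ s) (h2 : G.IsIndepFinset u) : u.card ≤ indepOn G s := by
  classical
  refine Finset.le_sup (f := Finset.card) ?_
  simp only [indepOn, Finset.mem_filter, Finset.mem_powerset]
  exact ⟨h1, by convert h2⟩

lemma exists_indepOn {V : Type*} (G : SimpleGraph V) (s : Finset V) :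
    ∃ u, u ⊆ s ∧ G.IsIndepFinset u ∧ u.card = indepOn G s := by
  classical
  have hne : (s.powerset.filter (fun u => G.IsIndepFinset u)).Nonempty := by
    refine ⟨∅, ?_⟩
    rw [Finset.mem_filter]; simp [SimpleGraph.IsIndepFinset]
  obtain ⟨u, hu, hcard⟩ := Finset.exists_mem_eq_sup _ hne Finset.card
  simp only [Finset.mem_filter, Finset.mem_powerset] at hu
  refine ⟨u, hu.1, hu.2, ?_⟩
  rw [indepOn]
  convert hcard.symm

lemma indepOn_mono {V : Type*} (G : SimpleGraph V) {s u : Finset V} (h : s ⊆ u) :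
    indepOn G s ≤ indepOn G u := by
  obtain ⟨w, hw1, hw2, hw3⟩ := exists_indepOn G s
  rw [← hw3]; exact le_indepOn (hw1.trans h) hw2

/-- The recursive bound function. -/
def fB : ℕ → ℕ → ℕ
  | 0, _ => 0
  | (t+1), α => α + (Nat.log 2 α + 1) * fB t α

lemma fB_zero : ∀ t, fB t 0 = 0
  | 0 => rfl
  | (t+1) => by simp [fB, fB_zero t]

lemma fB_mono : ∀ t, ∀ {α β : ℕ}, α ≤ β → fB t α ≤ fB t β
  | 0, _, _, _ => le_refl _
  | (t+1), α, β, h => by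
    simp only [fB]
    exact Nat.add_le_add h (Nat.mul_le_mul (by
      exact Nat.add_le_add_right (Nat.log_mono_right h) 1) (fB_mono t h))

lemma fB_superadd : ∀ t, ∀ (α β : ℕ), fB t α + fB t β ≤ fB t (α + β)
  | 0, _, _ => le_refl _
  | (t+1), α, β => by
    simp only [fB]
    have h1 : (Nat.log 2 α + 1) * fB t α ≤ (Nat.log 2 (α+β) + 1) * fB t α :=
      Nat.mul_le_mul_right _ (Nat.add_le_add_right (Nat.log_mono_right (Nat.le_add_right _ _)) 1)
    have h2 : (Nat.log 2 β + 1) * fB t β ≤ (Nat.log 2 (α+β) + 1) * fB t β :=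
      Nat.mul_le_mul_right _ (Nat.add_le_add_right (Nat.log_mono_right (Nat.le_add_left _ _)) 1)
    have h3 : (Nat.log 2 (α+β) + 1) * fB t α + (Nat.log 2 (α+β) + 1) * fB t β
        = (Nat.log 2 (α+β) + 1) * (fB t α + fB t β) := by ring
    calc α + (Nat.log 2 α + 1) * fB t α + (β + (Nat.log 2 β + 1) * fB t β)
        ≤ α + (Nat.log 2 (α+β) + 1) * fB t α + (β + (Nat.log 2 (α+β) + 1) * fB t β) := by
          omega
      _ = (α + β) + (Nat.log 2 (α+β) + 1) * (fB t α + fB t β) := by rw [← h3]; ring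
      _ ≤ (α + β) + (Nat.log 2 (α+β) + 1) * fB t (α + β) :=
          Nat.add_le_add_left (Nat.mul_le_mul_left _ (fB_superadd t α β)) _

lemma fB_real (k α : ℕ) : (fB (k+1) α : ℝ) ≤ 2 ^ k * α * (Real.logb 2 α + 1) ^ k := by
  induction k with
  | zero => simp [fB]
  | succ k ih =>
    rcases Nat.eq_zero_or_pos α with rfl | hα
    · simp [fB_zero]
    have hα1 : (1:ℝ) ≤ (α:ℝ) := by exact_mod_cast hα
    have hlogb : (0:ℝ) ≤ Real.logb 2 α := Real.logb_nonneg (by norm_num) hα1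
    have hcast : (Nat.log 2 α : ℝ) ≤ Real.logb 2 α := Real.natLog_le_logb α 2
    have hfpos : (0:ℝ) ≤ (fB (k+1) α : ℝ) := Nat.cast_nonneg _
    have key : (fB (k+2) α : ℝ) = (α:ℝ) + ((Nat.log 2 α : ℝ) + 1) * (fB (k+1) α : ℝ) := by
      show ((α + (Nat.log 2 α + 1) * fB (k+1) α : ℕ) : ℝ) = _
      push_cast; ring
    have h1 : ((Nat.log 2 α : ℝ) + 1) * (fB (k+1) α : ℝ)
        ≤ (Real.logb 2 α + 1) * (2 ^ k * α * (Real.logb 2 α + 1) ^ k) := by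
      apply mul_le_mul (by linarith) ih hfpos (by positivity)
    have h2 : (1:ℝ) ≤ (Real.logb 2 α + 1) ^ (k+1) := one_le_pow₀ (by linarith)
    have h3 : (1:ℝ) ≤ (2:ℝ) ^ k := one_le_pow₀ (by norm_num)
    rw [key]
    have : (Real.logb 2 α + 1) * (2 ^ k * α * (Real.logb 2 α + 1) ^ k)
        = 2 ^ k * α * (Real.logb 2 α + 1) ^ (k+1) := by ring
    rw [this] at h1
    have h4 : (α:ℝ) ≤ 2 ^ k * α * (Real.logb 2 α + 1) ^ (k+1) := by
      have e1 := mul_le_mul_of_nonneg_left h2 (show (0:ℝ) ≤ 2 ^ k * (α:ℝ) by positivity)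
      have e2 := mul_le_mul_of_nonneg_right h3 (show (0:ℝ) ≤ (α:ℝ) by positivity)
      nlinarith
    have h5 : (2:ℝ) ^ (k+1) * α * (Real.logb 2 α + 1) ^ (k+1)
        = 2 ^ k * α * (Real.logb 2 α + 1) ^ (k+1) + 2 ^ k * α * (Real.logb 2 α + 1) ^ (k+1) := by
      ring
    linarith

lemma interval_cover {V : Type*} [DecidableEq V] (A B : V → ℝ) (G : SimpleGraph V) :
    ∀ (n : ℕ) (s : Finset V), s.card ≤ n →
    (∀ u ∈ s, ∀ v ∈ s, G.Adj u v ↔ u ≠ v ∧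
      (Set.Icc (A u) (B u) ∩ Set.Icc (A v) (B v)).Nonempty) →
    ∃ C : Finset (Finset V), (∀ c ∈ C, G.IsClique (c : Set V)) ∧
      (∀ v ∈ s, ∃ c ∈ C, v ∈ c) ∧ C.card ≤ indepOn G s := by
  intro n
  induction n with
  | zero =>
    intro s hcard _
    refine ⟨∅, by simp, ?_, by simp⟩
    intro v hv
    simp_all [Finset.card_eq_zero.mp (Nat.le_zero.mp hcard)]
  | succ n IH =>
    intro s hcard hadj
    classical
    rcases s.eq_empty_or_nonempty with rfl | hne
    · exact ⟨∅, by simp, by simp, by simp⟩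
    obtain ⟨u, hu, hmin⟩ := Finset.exists_min_image s B hne
    -- the clique around u
    set c : Finset V := s.filter (fun v => v = u ∨ G.Adj u v) with hc
    have huc : u ∈ c := by simp [hc, hu]
    have hBu : ∀ v ∈ s, G.Adj u v → B u ∈ Set.Icc (A v) (B v) := by
      intro v hv hadjv
      obtain ⟨_, x, ⟨⟨h1, h2⟩, ⟨h3, h4⟩⟩⟩ := (hadj u hu v hv).mp hadjv
      have := hmin v hv
      exact ⟨by linarith, by linarith⟩
    have hclique : G.IsClique (c : Set V) := by
      intro x hx y hy hxy
      simp only [hc, Finset.coe_filter, Set.mem_setOf_eq] at hx hy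
      obtain ⟨hxs, hx2⟩ := hx
      obtain ⟨hys, hy2⟩ := hy
      rcases hx2 with rfl | hx2
      · rcases hy2 with rfl | hy2
        · exact absurd rfl hxy
        · exact hy2
      · rcases hy2 with rfl | hy2
        · exact hx2.symm
        · refine (hadj x hxs y hys).mpr ⟨hxy, ⟨B u, hBu x hxs hx2, hBu y hys hy2⟩⟩
    set s' : Finset V := s \ c with hs'
    have hss : s' ⊆ s := Finset.sdiff_subset
    have hlt : s'.card < s.card := Finset.card_lt_card ⟨hss, fun h => by
      have := h hu; simp [hs', huc] at this⟩
    obtain ⟨C', hC'1, hC'2, hC'3⟩ := IH s' (by omega) (fun x hx y hy => hadj x (hss hx) y (hss hy))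
    refine ⟨insert c C', ?_, ?_, ?_⟩
    · intro d hd
      rcases Finset.mem_insert.mp hd with rfl | hd
      · exact hclique
      · exact hC'1 d hd
    · intro v hv
      by_cases hvc : v ∈ c
      · exact ⟨c, Finset.mem_insert_self _ _, hvc⟩
      · obtain ⟨d, hd, hvd⟩ := hC'2 v (Finset.mem_sdiff.mpr ⟨hv, hvc⟩)
        exact ⟨d, Finset.mem_insert_of_mem hd, hvd⟩
    · -- card bound
      obtain ⟨I, hI1, hI2, hI3⟩ := exists_indepOn G s'
      have huI : u ∉ I := fun h => by
        have := hI1 h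
        rw [hs', Finset.mem_sdiff] at this
        exact this.2 huc
      have hins : G.IsIndepFinset (insert u I) := by
        intro x hx y hy hxy
        simp only [Finset.coe_insert, Set.mem_insert_iff, Finset.mem_coe] at hx hy
        have hnadj : ∀ z ∈ I, ¬ G.Adj u z := by
          intro z hz hadjz
          have hzs' := hI1 hz
          rw [hs', Finset.mem_sdiff] at hzs'
          exact hzs'.2 (by simp [hc, hzs'.1, hadjz])
        rcases hx with rfl | hx
        · rcases hy with rfl | hy
          · exact absurd rfl hxy
          · exact hnadj y hy
        · rcases hy with rfl | hy
          · exact fun h => hnadj x hx h.symm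
          · exact hI2 hx hy hxy
      have hsub : insert u I ⊆ s := by
        intro z hz
        rcases Finset.mem_insert.mp hz with rfl | hz
        · exact hu
        · exact hss (hI1 hz)
      have : I.card + 1 ≤ indepOn G s := by
        have h := le_indepOn hsub hins
        rwa [Finset.card_insert_of_notMem huI] at h
      calc (insert c C').card ≤ C'.card + 1 := Finset.card_insert_le _ _
        _ ≤ indepOn G s' + 1 := by omega
        _ ≤ indepOn G s := by omega

lemma box_cover {V : Type*} [DecidableEq V] :
    ∀ (t : ℕ) (a b : V → Fin (t+1) → ℝ) (G : SimpleGraph V) (s : Finset V),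
    (∀ u ∈ s, ∀ v ∈ s, G.Adj u v ↔ u ≠ v ∧
      ∀ i, (Set.Icc (a u i) (b u i) ∩ Set.Icc (a v i) (b v i)).Nonempty) →
    ∃ C : Finset (Finset V), (∀ c ∈ C, G.IsClique (c : Set V)) ∧
      (∀ v ∈ s, ∃ c ∈ C, v ∈ c) ∧ C.card ≤ fB (t+1) (indepOn G s) := by
  intro t
  induction t with
  | zero =>
    intro a b G s hadj
    have hf : fB 1 (indepOn G s) = indepOn G s := by simp [fB]
    rw [hf]
    refine interval_cover (fun v => a v 0) (fun v => b v 0) G s.card s le_rfl ?_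
    intro u hu v hv
    rw [hadj u hu v hv]
    constructor
    · rintro ⟨h1, h2⟩; exact ⟨h1, h2 0⟩
    · rintro ⟨h1, h2⟩
      refine ⟨h1, fun i => ?_⟩
      obtain rfl : i = 0 := Fin.fin_one_eq_zero i
      exact h2
  | succ t IH =>
    intro a b G s₀ hadj₀
    classical
    set lst : Fin (t+2) := Fin.last (t+1) with hlst
    -- cross non-adjacency helper
    have hcross : ∀ (s : Finset V),
        (∀ u ∈ s, ∀ v ∈ s, G.Adj u v ↔ u ≠ v ∧
          ∀ i, (Set.Icc (a u i) (b u i) ∩ Set.Icc (a v i) (b v i)).Nonempty) →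
        ∀ x ∈ s, ∀ y ∈ s, ∀ p : ℝ, b x lst ≤ p → p < a y lst → ¬ G.Adj x y := by
      intro s hadj x hx y hy p h1 h2 hAdj
      obtain ⟨_, hi⟩ := (hadj x hx y hy).mp hAdj
      obtain ⟨z, ⟨⟨hz1, hz2⟩, hz3, hz4⟩⟩ := hi lst
      linarith
    -- the split recursion at fixed dimension t+2, on clean sets
    have key : ∀ (m : ℕ) (s : Finset V), s.card ≤ m →
        (∀ u ∈ s, ∀ v ∈ s, G.Adj u v ↔ u ≠ v ∧
          ∀ i, (Set.Icc (a u i) (b u i) ∩ Set.Icc (a v i) (b v i)).Nonempty) →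
        (∀ v ∈ s, a v lst ≤ b v lst) →
        ∃ C : Finset (Finset V), (∀ c ∈ C, G.IsClique (c : Set V)) ∧
          (∀ v ∈ s, ∃ c ∈ C, v ∈ c) ∧
          C.card ≤ (Nat.log 2 (indepOn G s) + 1) * fB (t+1) (indepOn G s) := by
      intro m
      induction m with
      | zero =>
        intro s hcard _ _
        have : s = ∅ := Finset.card_eq_zero.mp (Nat.le_zero.mp hcard)
        subst this
        exact ⟨∅, by simp, by simp, by simp⟩
      | succ m IHm =>
        intro s hcard hadj hclean
        rcases s.eq_empty_or_nonempty with rfl | hne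
        · exact ⟨∅, by simp, by simp, by simp⟩
        set α := indepOn G s with hαdef
        have hα1 : 1 ≤ α := by
          obtain ⟨u, hu⟩ := hne
          have := le_indepOn (G := G) (Finset.singleton_subset_iff.mpr hu)
            (by simp [SimpleGraph.IsIndepFinset])
          simpa using this
        set mh := α / 2 with hmh
        -- choose the pivot p
        set Bim := s.image (fun v => b v lst) with hBim
        have hBimne : Bim.Nonempty := hne.image _
        set Q := Bim.filter (fun q => mh + 1 ≤ indepOn G (s.filter (fun v => b v lst ≤ q)))
          with hQ
        have hQne : Q.Nonempty := by
          refine ⟨Bim.max' hBimne, ?_⟩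
          rw [hQ, Finset.mem_filter]
          refine ⟨Bim.max'_mem hBimne, ?_⟩
          have hfeq : s.filter (fun v => b v lst ≤ Bim.max' hBimne) = s := by
            apply Finset.filter_true_of_mem
            intro v hv
            exact Bim.le_max' _ (Finset.mem_image_of_mem _ hv)
          rw [hfeq]
          have : mh < α := Nat.div_lt_self (by omega) (by norm_num)
          omega
        set p := Q.min' hQne with hp
        have hpQ : p ∈ Q := Q.min'_mem hQne
        rw [hQ, Finset.mem_filter] at hpQ
        obtain ⟨hpim, hpind⟩ := hpQ
        obtain ⟨u₀, hu₀s, hu₀⟩ := Finset.mem_image.mp hpim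
        -- the three parts
        set L := s.filter (fun v => b v lst < p) with hL
        set R := s.filter (fun v => p < a v lst) with hR
        set S := s.filter (fun v => a v lst ≤ p ∧ p ≤ b v lst) with hS
        have hLs : L ⊆ s := Finset.filter_subset _ _
        have hRs : R ⊆ s := Finset.filter_subset _ _
        have hSs : S ⊆ s := Finset.filter_subset _ _
        have htri : ∀ v ∈ s, v ∈ L ∨ v ∈ R ∨ v ∈ S := by
          intro v hv
          by_cases h1 : b v lst < p
          · exact Or.inl (Finset.mem_filter.mpr ⟨hv, h1⟩)
          by_cases h2 : p < a v lst
          · exact Or.inr (Or.inl (Finset.mem_filter.mpr ⟨hv, h2⟩))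
          · exact Or.inr (Or.inr (Finset.mem_filter.mpr ⟨hv, le_of_not_gt h2, le_of_not_gt h1⟩))
        have hu₀L : u₀ ∉ L := by
          rw [hL, Finset.mem_filter]
          rintro ⟨-, h⟩; rw [hu₀] at h; exact lt_irrefl _ h
        have hu₀R : u₀ ∉ R := by
          rw [hR, Finset.mem_filter]
          rintro ⟨-, h⟩
          have h2 := hclean u₀ hu₀s
          rw [hu₀] at h2; linarith
        have hLcard : L.card ≤ m := by
          have : L.card < s.card :=
            Finset.card_lt_card ⟨hLs, fun h => hu₀L (h hu₀s)⟩
          omega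
        have hRcard : R.card ≤ m := by
          have : R.card < s.card :=
            Finset.card_lt_card ⟨hRs, fun h => hu₀R (h hu₀s)⟩
          omega
        -- independence bounds
        have hαL : indepOn G L ≤ mh := by
          obtain ⟨I, hI1, hI2, hI3⟩ := exists_indepOn G L
          rcases I.eq_empty_or_nonempty with rfl | hIne
          · simp [← hI3]
          obtain ⟨w, hw, hwmax⟩ := Finset.exists_max_image I (fun v => b v lst) hIne
          have hwL := hI1 hw
          rw [hL, Finset.mem_filter] at hwL
          have hqim : b w lst ∈ Bim := Finset.mem_image_of_mem _ hwL.1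
          have hqQ : b w lst ∉ Q := by
            intro hmem
            have := Q.min'_le _ hmem
            rw [← hp] at this
            linarith [hwL.2]
          rw [hQ, Finset.mem_filter] at hqQ
          push_neg at hqQ
          have hle := hqQ hqim
          have hsub : I ⊆ s.filter (fun v => b v lst ≤ b w lst) := by
            intro v hv
            have hvL := hI1 hv
            rw [hL, Finset.mem_filter] at hvL
            exact Finset.mem_filter.mpr ⟨hvL.1, hwmax v hv⟩
          have := le_indepOn hsub hI2
          omega
        have hαR : indepOn G R + (mh + 1) ≤ α := by
          obtain ⟨I, hI1, hI2, hI3⟩ := exists_indepOn G R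
          obtain ⟨J, hJ1, hJ2, hJ3⟩ := exists_indepOn G (s.filter (fun v => b v lst ≤ p))
          have hJcard : mh + 1 ≤ J.card := by rw [hJ3]; exact hpind
          have hdisj : Disjoint I J := by
            rw [Finset.disjoint_left]
            intro v hvI hvJ
            have h1 := hI1 hvI; rw [hR, Finset.mem_filter] at h1
            have h2 := hJ1 hvJ; rw [Finset.mem_filter] at h2
            have := hclean v h1.1
            linarith [h1.2, h2.2]
          have hunion : G.IsIndepFinset (I ∪ J) := by
            intro x hx y hy hxy
            simp only [Finset.coe_union, Set.mem_union, Finset.mem_coe] at hx hy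
            rcases hx with hx | hx
            · rcases hy with hy | hy
              · exact hI2 hx hy hxy
              · -- x ∈ I ⊆ R, y ∈ J : b y ≤ p < a x
                have h1 := hI1 hx; rw [hR, Finset.mem_filter] at h1
                have h2 := hJ1 hy; rw [Finset.mem_filter] at h2
                exact fun h => hcross s hadj y h2.1 x h1.1 p h2.2 h1.2 h.symm
            · rcases hy with hy | hy
              · have h1 := hI1 hy; rw [hR, Finset.mem_filter] at h1
                have h2 := hJ1 hx; rw [Finset.mem_filter] at h2
                exact hcross s hadj x h2.1 y h1.1 p h2.2 h1.2
              · exact hJ2 hx hy hxy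
          have hsub : I ∪ J ⊆ s :=
            Finset.union_subset (hI1.trans hRs) (hJ1.trans (Finset.filter_subset _ _))
          have := le_indepOn hsub hunion
          rw [Finset.card_union_of_disjoint hdisj] at this
          omega
        have hαLR : indepOn G L + indepOn G R ≤ α := by
          obtain ⟨I, hI1, hI2, hI3⟩ := exists_indepOn G L
          obtain ⟨J, hJ1, hJ2, hJ3⟩ := exists_indepOn G R
          have hdisj : Disjoint I J := by
            rw [Finset.disjoint_left]
            intro v hvI hvJ
            have h1 := hI1 hvI; rw [hL, Finset.mem_filter] at h1
            have h2 := hJ1 hvJ; rw [hR, Finset.mem_filter] at h2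
            have := hclean v h1.1
            linarith [h1.2, h2.2]
          have hunion : G.IsIndepFinset (I ∪ J) := by
            intro x hx y hy hxy
            simp only [Finset.coe_union, Set.mem_union, Finset.mem_coe] at hx hy
            rcases hx with hx | hx
            · rcases hy with hy | hy
              · exact hI2 hx hy hxy
              · have h1 := hI1 hx; rw [hL, Finset.mem_filter] at h1
                have h2 := hJ1 hy; rw [hR, Finset.mem_filter] at h2
                exact hcross s hadj x h1.1 y h2.1 p (le_of_lt h1.2) h2.2
            · rcases hy with hy | hy
              · have h1 := hI1 hy; rw [hL, Finset.mem_filter] at h1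
                have h2 := hJ1 hx; rw [hR, Finset.mem_filter] at h2
                exact fun h => hcross s hadj y h1.1 x h2.1 p (le_of_lt h1.2) h2.2 h.symm
              · exact hJ2 hx hy hxy
          have hsub : I ∪ J ⊆ s := Finset.union_subset (hI1.trans hLs) (hJ1.trans hRs)
          have := le_indepOn hsub hunion
          rw [Finset.card_union_of_disjoint hdisj] at this
          omega
        -- cover the middle part via induction on dimension
        have hadjS : ∀ u ∈ S, ∀ v ∈ S, G.Adj u v ↔ u ≠ v ∧
            ∀ i : Fin (t+1), (Set.Icc (a u i.castSucc) (b u i.castSucc) ∩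
              Set.Icc (a v i.castSucc) (b v i.castSucc)).Nonempty := by
          intro u hu v hv
          have huS := Finset.mem_filter.mp hu
          have hvS := Finset.mem_filter.mp hv
          rw [hadj u (hSs hu) v (hSs hv)]
          constructor
          · rintro ⟨h1, h2⟩
            exact ⟨h1, fun i => h2 i.castSucc⟩
          · rintro ⟨h1, h2⟩
            refine ⟨h1, fun i => ?_⟩
            refine Fin.lastCases ?_ (fun j => h2 j) i
            exact ⟨p, ⟨huS.2.1, huS.2.2⟩, ⟨hvS.2.1, hvS.2.2⟩⟩
        obtain ⟨CS, hCS1, hCS2, hCS3⟩ :=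
          IH (fun v i => a v i.castSucc) (fun v i => b v i.castSucc) G S hadjS
        obtain ⟨CL, hCL1, hCL2, hCL3⟩ := IHm L hLcard
          (fun x hx y hy => hadj x (hLs hx) y (hLs hy)) (fun v hv => hclean v (hLs hv))
        obtain ⟨CR, hCR1, hCR2, hCR3⟩ := IHm R hRcard
          (fun x hx y hy => hadj x (hRs hx) y (hRs hy)) (fun v hv => hclean v (hRs hv))
        refine ⟨CS ∪ CL ∪ CR, ?_, ?_, ?_⟩
        · intro c hc
          rcases Finset.mem_union.mp hc with hc | hc
          · rcases Finset.mem_union.mp hc with hc | hc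
            · exact hCS1 c hc
            · exact hCL1 c hc
          · exact hCR1 c hc
        · intro v hv
          rcases htri v hv with h | h | h
          · obtain ⟨c, hc, hvc⟩ := hCL2 v h
            exact ⟨c, by simp [Finset.mem_union, hc], hvc⟩
          · obtain ⟨c, hc, hvc⟩ := hCR2 v h
            exact ⟨c, by simp [Finset.mem_union, hc], hvc⟩
          · obtain ⟨c, hc, hvc⟩ := hCS2 v h
            exact ⟨c, by simp [Finset.mem_union, hc], hvc⟩
        · -- the counting
          have hmono : ∀ β : ℕ, β ≤ mh →
              (Nat.log 2 β + 1) * fB (t+1) β ≤ Nat.log 2 α * fB (t+1) β := by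
            intro β hβ
            rcases Nat.eq_zero_or_pos β with rfl | hβ1
            · simp [fB_zero]
            have hα2 : 2 ≤ α := by omega
            have hlogα : 1 ≤ Nat.log 2 α := Nat.log_pos (by norm_num) hα2
            have h1 : Nat.log 2 β ≤ Nat.log 2 (α / 2) := Nat.log_mono_right hβ
            have h2 : Nat.log 2 (α / 2) = Nat.log 2 α - 1 := Nat.log_div_base 2 α
            have : Nat.log 2 β + 1 ≤ Nat.log 2 α := by omega
            exact Nat.mul_le_mul_right _ this
          have hαRle : indepOn G R ≤ mh := by omega
          have hS3 : CS.card ≤ fB (t+1) α :=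
            hCS3.trans (fB_mono _ (indepOn_mono G hSs))
          have hL3 : CL.card ≤ Nat.log 2 α * fB (t+1) (indepOn G L) :=
            hCL3.trans (hmono _ hαL)
          have hR3 : CR.card ≤ Nat.log 2 α * fB (t+1) (indepOn G R) :=
            hCR3.trans (hmono _ hαRle)
          have hsum : fB (t+1) (indepOn G L) + fB (t+1) (indepOn G R) ≤ fB (t+1) α :=
            (fB_superadd _ _ _).trans (fB_mono _ hαLR)
          calc (CS ∪ CL ∪ CR).card ≤ (CS ∪ CL).card + CR.card := Finset.card_union_le _ _
            _ ≤ CS.card + CL.card + CR.card := by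
                have := Finset.card_union_le CS CL; omega
            _ ≤ fB (t+1) α + Nat.log 2 α * fB (t+1) (indepOn G L)
                + Nat.log 2 α * fB (t+1) (indepOn G R) := by omega
            _ = fB (t+1) α + Nat.log 2 α *
                (fB (t+1) (indepOn G L) + fB (t+1) (indepOn G R)) := by ring
            _ ≤ fB (t+1) α + Nat.log 2 α * fB (t+1) α := by
                have := Nat.mul_le_mul_left (Nat.log 2 α) hsum; omega
            _ = (Nat.log 2 α + 1) * fB (t+1) α := by ring
    -- now the outer step: remove degenerate vertices, then apply `key`
    set D := s₀.filter (fun v => b v lst < a v lst) with hD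
    have hDs : D ⊆ s₀ := Finset.filter_subset _ _
    have hDindep : G.IsIndepFinset D := by
      intro x hx y hy hxy hAdj
      rw [Finset.mem_coe] at hx hy
      have hxf := Finset.mem_filter.mp hx
      obtain ⟨-, hi⟩ := (hadj₀ x (hDs hx) y (hDs hy)).mp hAdj
      obtain ⟨z, ⟨⟨hz1, hz2⟩, -, -⟩⟩ := hi lst
      linarith [hxf.2]
    have hDcard : D.card ≤ indepOn G s₀ := le_indepOn hDs hDindep
    set s' := s₀ \ D with hs'
    have hs's : s' ⊆ s₀ := Finset.sdiff_subset
    have hclean' : ∀ v ∈ s', a v lst ≤ b v lst := by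
      intro v hv
      rw [hs', Finset.mem_sdiff] at hv
      by_contra h
      exact hv.2 (Finset.mem_filter.mpr ⟨hv.1, lt_of_not_ge h⟩)
    obtain ⟨C', hC'1, hC'2, hC'3⟩ := key s'.card s' le_rfl
      (fun x hx y hy => hadj₀ x (hs's hx) y (hs's hy)) hclean'
    set CD := D.image (fun v => ({v} : Finset V)) with hCD
    refine ⟨CD ∪ C', ?_, ?_, ?_⟩
    · intro c hc
      rcases Finset.mem_union.mp hc with hc | hc
      · obtain ⟨v, -, rfl⟩ := Finset.mem_image.mp hc
        simp [SimpleGraph.isClique_iff, Set.pairwise_singleton]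
      · exact hC'1 c hc
    · intro v hv
      by_cases hvD : v ∈ D
      · exact ⟨{v}, Finset.mem_union_left _ (Finset.mem_image_of_mem _ hvD), by simp⟩
      · obtain ⟨c, hc, hvc⟩ := hC'2 v (Finset.mem_sdiff.mpr ⟨hv, hvD⟩)
        exact ⟨c, Finset.mem_union_right _ hc, hvc⟩
    · have h1 : CD.card ≤ D.card := Finset.card_image_le
      have h2 : C'.card ≤ (Nat.log 2 (indepOn G s₀) + 1) * fB (t+1) (indepOn G s₀) := by
        refine hC'3.trans ?_
        have hmono := indepOn_mono G hs's
        exact Nat.mul_le_mul (Nat.add_le_add_right (Nat.log_mono_right hmono) 1)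
          (fB_mono _ hmono)
      have : fB (t+2) (indepOn G s₀)
          = indepOn G s₀ + (Nat.log 2 (indepOn G s₀) + 1) * fB (t+1) (indepOn G s₀) := rfl
      calc (CD ∪ C').card ≤ CD.card + C'.card := Finset.card_union_le _ _
        _ ≤ fB (t+2) (indepOn G s₀) := by omega

lemma indepNum_eq {V : Type*} [Fintype V] [DecidableEq V] (G : SimpleGraph V) :
    _root_.indepNum G = indepOn G Finset.univ := by
  apply le_antisymm
  · apply csSup_le'
    rintro n ⟨s, hs, rfl⟩
    exact le_indepOn (Finset.subset_univ s) hs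
  · obtain ⟨u, -, hu2, hu3⟩ := exists_indepOn G (Finset.univ : Finset V)
    rw [← hu3]
    apply le_csSup
    · refine ⟨Fintype.card V, ?_⟩
      rintro n ⟨s, -, rfl⟩
      exact Finset.card_le_univ s
    · exact ⟨u, hu2, rfl⟩


theorem box_clique_cover_bound (t n : ℕ) (ht : 2 ≤ t)
    (a b : Fin n → Fin t → ℝ) (G : SimpleGraph (Fin n))
    (hG : ∀ u v : Fin n, G.Adj u v ↔ u ≠ v ∧
      (Set.pi Set.univ (fun i => Set.Icc (a u i) (b u i)) ∩
        Set.pi Set.univ (fun i => Set.Icc (a v i) (b v i))).Nonempty) :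
    (cliqueCoverNum G : ℝ) ≤
      2 ^ (t - 1) * (_root_.indepNum G : ℝ) * (Real.logb 2 (_root_.indepNum G : ℝ) + 1) ^ (t - 1) := by
  obtain ⟨k, rfl⟩ : ∃ k, t = k + 1 := ⟨t - 1, by omega⟩
  have hadj : ∀ u ∈ (Finset.univ : Finset (Fin n)), ∀ v ∈ (Finset.univ : Finset (Fin n)),
      G.Adj u v ↔ u ≠ v ∧
      ∀ i, (Set.Icc (a u i) (b u i) ∩ Set.Icc (a v i) (b v i)).Nonempty := by
    intro u _ v _
    rw [hG u v, ← Set.pi_inter_distrib, Set.univ_pi_nonempty_iff]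
  obtain ⟨C, hC1, hC2, hC3⟩ := box_cover k a b G Finset.univ hadj
  have hβ : cliqueCoverNum G ≤ C.card := by
    apply Nat.sInf_le
    exact ⟨C, ⟨hC1, fun v => hC2 v (Finset.mem_univ v)⟩, rfl⟩
  have hβ2 : cliqueCoverNum G ≤ fB (k+1) (_root_.indepNum G) := by
    rw [indepNum_eq]; omega
  calc (cliqueCoverNum G : ℝ) ≤ (fB (k+1) (_root_.indepNum G) : ℝ) := by exact_mod_cast hβ2
    _ ≤ 2 ^ k * (_root_.indepNum G : ℝ) * (Real.logb 2 (_root_.indepNum G : ℝ) + 1) ^ k :=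
        fB_real k (_root_.indepNum G)
    _ = 2 ^ (k + 1 - 1) * (_root_.indepNum G : ℝ)
        * (Real.logb 2 (_root_.indepNum G : ℝ) + 1) ^ (k + 1 - 1) := by norm_num
end
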